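/- Let f : ℝ → ℝ be continuous on a neighborhood of x₀ and differentiable at x₀. Then the limit as h → 0⁺ of (3/(2h³)) · ∫_{-h}^{h} t · f(x₀ + t) dt exists and equals f'(x₀) (the classical Lanczos derivative formula). -/

import Mathlib

open Filter Topology intervalIntegral

/-- Classical Lanczos derivative formula: if `f` is continuous on a neighborhood of `x₀`
and differentiable at `x₀`, then `(3/(2h³)) ∫_{-h}^{h} t·f(x₀+t) dt → f'(x₀)` as `h → 0⁺`. -/
theorem lanczos_first_derivative (f : ℝ → ℝ) (x₀ : ℝ) (s : Set ℝ) (hs : s ∈ 𝓝 x₀)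
    (hfc : ContinuousOn f s) (hdf : DifferentiableAt ℝ f x₀) :
    Tendsto (fun h : ℝ => (3 / (2 * h ^ 3)) * ∫ t in (-h)..h, t * f (x₀ + t))
      (𝓝[>] (0 : ℝ)) (𝓝 (deriv f x₀)) := by
  set d := deriv f x₀ with hd
  have hder : HasDerivAt f d x₀ := hdf.hasDerivAt
  rw [Metric.tendsto_nhdsWithin_nhds]
  intro ε hε
  obtain ⟨δ₀, hδ₀, hball⟩ := Metric.mem_nhds_iff.mp hs
  have hlo := hasDerivAt_iff_isLittleO.mp hder
  have hev := hlo.def (show (0:ℝ) < ε / 2 by positivity)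
  rw [Metric.eventually_nhds_iff] at hev
  obtain ⟨δ₁, hδ₁, hb⟩ := hev
  refine ⟨min δ₀ δ₁, lt_min hδ₀ hδ₁, ?_⟩
  intro h hh hdist
  have hh0 : 0 < h := hh
  rw [Real.dist_eq, sub_zero, abs_of_pos hh0] at hdist
  have hhδ₀ : h < δ₀ := lt_of_lt_of_le hdist (min_le_left _ _)
  have hhδ₁ : h < δ₁ := lt_of_lt_of_le hdist (min_le_right _ _)
  have hneg : -h ≤ h := by linarith
  -- continuity of shifted f on [-h, h]
  have hmap : ∀ t ∈ Set.uIcc (-h) h, x₀ + t ∈ s := by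
    intro t ht
    rw [Set.uIcc_of_le hneg] at ht
    apply hball
    rw [Metric.mem_ball, Real.dist_eq, add_sub_cancel_left]
    calc |t| ≤ h := abs_le.mpr ⟨ht.1, ht.2⟩
    _ < δ₀ := hhδ₀
  have hfcont : ContinuousOn (fun t => f (x₀ + t)) (Set.uIcc (-h) h) :=
    hfc.comp (by fun_prop) hmap
  -- the remainder function
  set G : ℝ → ℝ := fun t => f (x₀ + t) - f x₀ - t * d with hG
  have hGcont : ContinuousOn (fun t => t * G t) (Set.uIcc (-h) h) := by
    apply ContinuousOn.mul continuousOn_id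
    exact (hfcont.sub continuousOn_const).sub (by fun_prop)
  have hGint : IntervalIntegrable (fun t => t * G t) MeasureTheory.volume (-h) h :=
    hGcont.intervalIntegrable
  have hIint : IntervalIntegrable (fun t => t * f (x₀ + t)) MeasureTheory.volume (-h) h :=
    (ContinuousOn.mul continuousOn_id hfcont).intervalIntegrable
  -- decompose the integral
  have hdecomp : ∫ t in (-h)..h, t * f (x₀ + t)
      = (∫ t in (-h)..h, t * G t) + d * (2 * h ^ 3 / 3) := by
    have h1 : ∀ t : ℝ, t * f (x₀ + t) = t * G t + f x₀ * t + d * t ^ 2 := by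
      intro t; simp only [hG]; ring
    have hi2 : IntervalIntegrable (fun t : ℝ => f x₀ * t) MeasureTheory.volume (-h) h :=
      (Continuous.intervalIntegrable (by continuity) _ _)
    have hi3 : IntervalIntegrable (fun t : ℝ => d * t ^ 2) MeasureTheory.volume (-h) h :=
      (Continuous.intervalIntegrable (by continuity) _ _)
    simp only [h1]
    rw [intervalIntegral.integral_add (hGint.add hi2) hi3,
      intervalIntegral.integral_add hGint hi2,
      intervalIntegral.integral_const_mul, intervalIntegral.integral_const_mul,
      integral_id, integral_pow]
    ring
  -- pointwise bound on the remainder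
  have hbound : ∀ t ∈ Set.Icc (-h) h, |t * G t| ≤ ε / 2 * t ^ 2 := by
    intro t ht
    have htabs : |t| ≤ h := abs_le.mpr ⟨ht.1, ht.2⟩
    have hGb : |G t| ≤ ε / 2 * |t| := by
      have := hb (y := x₀ + t) (by
        rw [Real.dist_eq, add_sub_cancel_left]
        exact lt_of_le_of_lt htabs hhδ₁)
      simpa [hG, Real.norm_eq_abs, smul_eq_mul] using this
    calc |t * G t| = |t| * |G t| := abs_mul _ _
      _ ≤ |t| * (ε / 2 * |t|) := by
          exact mul_le_mul_of_nonneg_left hGb (abs_nonneg t)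
      _ = ε / 2 * |t| ^ 2 := by ring
      _ = ε / 2 * t ^ 2 := by rw [sq_abs]
  -- bound the remainder integral
  have hrem : |∫ t in (-h)..h, t * G t| ≤ ε / 2 * (2 * h ^ 3 / 3) := by
    calc |∫ t in (-h)..h, t * G t| ≤ ∫ t in (-h)..h, |t * G t| := by
          simpa only [Real.norm_eq_abs] using
            intervalIntegral.norm_integral_le_integral_norm
              (f := fun t => t * G t) (μ := MeasureTheory.volume) hneg
      _ ≤ ∫ t in (-h)..h, ε / 2 * t ^ 2 := by
          apply intervalIntegral.integral_mono_on hneg hGint.norm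
            ((continuousOn_const.mul (continuousOn_id.pow 2)).intervalIntegrable)
          exact hbound
      _ = ε / 2 * (2 * h ^ 3 / 3) := by
          rw [intervalIntegral.integral_const_mul, integral_pow]; ring
  -- conclude
  have hh3 : h ^ 3 ≠ 0 := by positivity
  rw [Real.dist_eq, hdecomp]
  have heq : 3 / (2 * h ^ 3) * ((∫ t in (-h)..h, t * G t) + d * (2 * h ^ 3 / 3)) - d
      = 3 / (2 * h ^ 3) * ∫ t in (-h)..h, t * G t := by
    field_simp
    ring
  rw [heq, abs_mul]
  have h3pos : (0:ℝ) < 3 / (2 * h ^ 3) := by positivity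
  rw [abs_of_pos h3pos]
  calc 3 / (2 * h ^ 3) * |∫ t in (-h)..h, t * G t|
      ≤ 3 / (2 * h ^ 3) * (ε / 2 * (2 * h ^ 3 / 3)) :=
        mul_le_mul_of_nonneg_left hrem (le_of_lt h3pos)
    _ = ε / 2 := by field_simp
    _ < ε := by linarith
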